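/- For integers 0 ≤ n ≤ N and every real t ≥ 1, one has Σ_{j=n}^{N} C(N,j)·(t−1)^{N−j} ≤ C(N,n)·t^{N−n}. In particular, for a prime p and 0 ≤ n ≤ p−2, (1/p^{p-2})·Σ_{j=n}^{p-2} C(p−2,j)·(p−1)^{p−2−j} ≤ C(p−2,n)/p^n. -/

import Mathlib

open Finset

lemma choose_aux {N n k : ℕ} (h : n + k ≤ N) :
    N.choose k ≤ N.choose n * (N - n).choose k := by
  have h1 : N.choose (n + k) * (n + k).choose n = N.choose n * (N - n).choose k := by
    have := Nat.choose_mul (n := N) (k := n + k) (s := n) (Nat.le_add_right _ _)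
    simpa using this
  have h2 : N.choose (n + k) * (n + k).choose k = N.choose k * (N - k).choose n := by
    have := Nat.choose_mul (n := N) (k := n + k) (s := k) (Nat.le_add_left _ _)
    simpa using this
  have h3 : (n + k).choose n = (n + k).choose k := by
    have := Nat.choose_symm (Nat.le_add_right n k)
    simpa using this.symm
  have hpos : 0 < (N - k).choose n := Nat.choose_pos (by omega)
  calc N.choose k ≤ N.choose k * (N - k).choose n := Nat.le_mul_of_pos_right _ (by omega)
    _ = N.choose (n + k) * (n + k).choose k := h2.symm
    _ = N.choose n * (N - n).choose k := by rw [← h3, h1]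

lemma main_ineq (N n : ℕ) (hn : n ≤ N) (t : ℝ) (ht : 1 ≤ t) :
    ∑ j ∈ Finset.Icc n N, (N.choose j : ℝ) * (t - 1) ^ (N - j) ≤
      (N.choose n : ℝ) * t ^ (N - n) := by
  have hx : (0:ℝ) ≤ t - 1 := by linarith
  -- reindex LHS: j = N - k
  have hL : ∑ j ∈ Finset.Icc n N, (N.choose j : ℝ) * (t - 1) ^ (N - j)
      = ∑ k ∈ Finset.range (N - n + 1), (N.choose k : ℝ) * (t - 1) ^ k := by
    rw [← Nat.Ico_zero_eq_range, ← Finset.Ico_add_one_right_eq_Icc]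
    refine Finset.sum_nbij' (fun j => N - j) (fun k => N - k) ?_ ?_ ?_ ?_ ?_
    · intro j hj; simp only [Finset.mem_Ico] at *; omega
    · intro k hk; simp only [Finset.mem_Ico] at *; omega
    · intro j hj; simp only [Finset.mem_Ico] at hj; show N - (N - j) = j; omega
    · intro k hk; simp only [Finset.mem_Ico] at hk; show N - (N - k) = k; omega
    · intro j hj; simp only [Finset.mem_Ico] at hj
      have := Nat.choose_symm (show j ≤ N by omega)
      rw [this]
  have hR : (N.choose n : ℝ) * t ^ (N - n)
      = ∑ k ∈ Finset.range (N - n + 1),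
          (N.choose n : ℝ) * ((N - n).choose k : ℝ) * (t - 1) ^ k := by
    have : t ^ (N - n) = ((t - 1) + 1) ^ (N - n) := by ring_nf
    rw [this, add_pow]
    rw [Finset.mul_sum]
    refine Finset.sum_congr rfl fun k hk => ?_
    simp [mul_comm, mul_assoc, mul_left_comm]
  rw [hL, hR]
  refine Finset.sum_le_sum fun k hk => ?_
  simp only [Finset.mem_range] at hk
  have := choose_aux (N := N) (n := n) (k := k) (by omega)
  have : (N.choose k : ℝ) ≤ (N.choose n : ℝ) * ((N - n).choose k : ℝ) := by
    exact_mod_cast this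
  exact mul_le_mul_of_nonneg_right this (pow_nonneg hx k)

theorem binomial_tail_sum_le
    : (∀ N n : ℕ, n ≤ N → ∀ t : ℝ, 1 ≤ t →
        ∑ j ∈ Finset.Icc n N, (N.choose j : ℝ) * (t - 1) ^ (N - j) ≤
          (N.choose n : ℝ) * t ^ (N - n)) ∧
      (∀ p n : ℕ, p.Prime → n ≤ p - 2 →
        (1 / (p : ℝ) ^ (p - 2)) *
            ∑ j ∈ Finset.Icc n (p - 2),
              ((p - 2).choose j : ℝ) * ((p : ℝ) - 1) ^ (p - 2 - j) ≤
          ((p - 2).choose n : ℝ) / (p : ℝ) ^ n) := by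
  constructor
  · exact main_ineq
  · intro p n hp hn
    have hp2 : 2 ≤ p := hp.two_le
    have hpR : (1:ℝ) ≤ (p : ℝ) := by exact_mod_cast show (1:ℕ) ≤ p by omega
    have h := main_ineq (p - 2) n hn (p : ℝ) hpR
    have hppos : (0:ℝ) < (p : ℝ) ^ (p - 2) := by positivity
    rw [one_div, inv_mul_le_iff₀ hppos]
    refine h.trans_eq ?_
    have hpn : (p:ℝ) ^ (p - 2) = (p:ℝ) ^ (p - 2 - n) * (p:ℝ) ^ n := by
      rw [← pow_add]; congr 1; omega
    rw [hpn]
    have hne : (p:ℝ) ^ n ≠ 0 := by positivity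
    field_simp
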